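/- Let (l,n,x,y) be a real null tetrad on Minkowski ℝ⁴ with lowered covectors λ, ν, ξ, υ, let c ∈ ℝ with c ≠ 0, and define Ric_{ab} = -c(λ_a ν_b + ν_a λ_b - ξ_a ξ_b - υ_a υ_b). If k ∈ ℝ⁴ is a nonzero null vector satisfying Σ_b Ric_{ab} k^b = δ k_a for some δ ∈ ℝ (where k_a is the lowered covector of k), then k is proportional to l or k is proportional to n. -/

import Mathlib

/-- The Minkowski metric `η = diag(-1,1,1,1)` on `ℝ⁴` (its own inverse). -/
def eta (a b : Fin 4) : ℝ := if a = b then (if a = 0 then -1 else 1) else 0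

/-- The lowered covector `v_a = η_{ab} v^b` of a vector `v`. -/
def lower (v : Fin 4 → ℝ) (a : Fin 4) : ℝ := ∑ b : Fin 4, eta a b * v b

/-- The Minkowski inner product of signature `(-,+,+,+)`. -/
def minkowski (v w : Fin 4 → ℝ) : ℝ :=
  -(v 0 * w 0) + v 1 * w 1 + v 2 * w 2 + v 3 * w 3

lemma mink_symm (v w : Fin 4 → ℝ) : minkowski v w = minkowski w v := by
  simp only [minkowski]; ring

lemma mink_sub_smul (u k v : Fin 4 → ℝ) (t : ℝ) :
    minkowski u (fun i => k i - t * v i) = minkowski u k - t * minkowski u v := by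
  simp only [minkowski]; ring

lemma contract (l n x y k u : Fin 4 → ℝ) (c δ : ℝ) (Ric : Fin 4 → Fin 4 → ℝ)
    (hRic : ∀ a b, Ric a b =
      -c * (lower l a * lower n b + lower n a * lower l b
        - lower x a * lower x b - lower y a * lower y b))
    (heig : ∀ a, ∑ b : Fin 4, Ric a b * k b = δ * lower k a) :
    -c * (minkowski u l * minkowski n k + minkowski u n * minkowski l k
       - minkowski u x * minkowski x k - minkowski u y * minkowski y k)
    = δ * minkowski u k := by
  have h : ∑ a : Fin 4, u a * (∑ b : Fin 4, Ric a b * k b)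
      = ∑ a : Fin 4, u a * (δ * lower k a) :=
    Finset.sum_congr rfl fun a _ => by rw [heig a]
  simp only [hRic] at h
  simp [lower, eta, Fin.sum_univ_four] at h
  simp only [minkowski]
  linear_combination h

set_option maxHeartbeats 1000000 in
lemma tetrad_nondeg (l n x y : Fin 4 → ℝ)
    (hln : minkowski l n = 1)
    (hll : minkowski l l = 0) (hnn : minkowski n n = 0)
    (hxx : minkowski x x = 1) (hyy : minkowski y y = 1)
    (hlx : minkowski l x = 0) (hly : minkowski l y = 0)
    (hnx : minkowski n x = 0) (hny : minkowski n y = 0) (hxy : minkowski x y = 0)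
    (w : Fin 4 → ℝ)
    (h1 : minkowski l w = 0) (h2 : minkowski n w = 0)
    (h3 : minkowski x w = 0) (h4 : minkowski y w = 0) : w = 0 := by
  classical
  set M : Matrix (Fin 4) (Fin 4) ℝ :=
    !![l 0, l 1, l 2, l 3; n 0, n 1, n 2, n 3;
       x 0, x 1, x 2, x 3; y 0, y 1, y 2, y 3] with hM
  set D : Matrix (Fin 4) (Fin 4) ℝ :=
    !![-1,0,0,0; 0,1,0,0; 0,0,1,0; 0,0,0,1] with hD
  set G : Matrix (Fin 4) (Fin 4) ℝ := !![0,1,0,0; 1,0,0,0; 0,0,1,0; 0,0,0,1] with hGdef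
  have hG : M * D * M.transpose = G := by
    simp only [minkowski] at hll hnn hxx hyy hln hlx hly hnx hny hxy
    ext i j
    fin_cases i <;> fin_cases j <;>
      (simp [hM, hD, hGdef, Matrix.mul_apply, Fin.sum_univ_four]) <;>
      linarith [hll, hnn, hxx, hyy, hln, hlx, hly, hnx, hny, hxy]
  have hGG : G * G = 1 := by
    ext i j
    fin_cases i <;> fin_cases j <;>
      simp [hGdef, Matrix.mul_apply, Fin.sum_univ_four, Matrix.one_apply,
        Matrix.vecHead, Matrix.vecTail]
  have hdetG : G.det ≠ 0 := by
    intro h0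
    have := congrArg Matrix.det hGG
    rw [Matrix.det_mul, h0, Matrix.det_one] at this
    norm_num at this
  have hdetM : IsUnit M.det := by
    have h := congrArg Matrix.det hG
    rw [Matrix.det_mul, Matrix.det_mul, Matrix.det_transpose] at h
    refine isUnit_iff_ne_zero.mpr fun h0 => hdetG ?_
    rw [← h, h0]; ring
  have e0 : lower w 0 = -w 0 := by simp [lower, eta, Fin.sum_univ_four]
  have e1 : lower w 1 = w 1 := by simp [lower, eta, Fin.sum_univ_four]
  have e2 : lower w 2 = w 2 := by simp [lower, eta, Fin.sum_univ_four]
  have e3 : lower w 3 = w 3 := by simp [lower, eta, Fin.sum_univ_four]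
  have hmv : M.mulVec (fun a => lower w a) = 0 := by
    simp only [minkowski] at h1 h2 h3 h4
    funext i
    fin_cases i <;>
      (simp [hM, Matrix.mulVec, dotProduct, Fin.sum_univ_four,
        e0, e1, e2, e3]) <;>
      linarith [h1, h2, h3, h4]
  have hlw : (fun a => lower w a) = 0 := by
    have hinj : Function.Injective M.mulVec :=
      Matrix.mulVec_injective_iff_isUnit.mpr ((Matrix.isUnit_iff_isUnit_det M).mpr hdetM)
    apply hinj
    rw [hmv, Matrix.mulVec_zero]
  have z0 : w 0 = 0 := by have := congrFun hlw 0; rw [e0] at this; simpa using this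
  have z1 : w 1 = 0 := by have := congrFun hlw 1; rw [e1] at this; simpa using this
  have z2 : w 2 = 0 := by have := congrFun hlw 2; rw [e2] at this; simpa using this
  have z3 : w 3 = 0 := by have := congrFun hlw 3; rw [e3] at this; simpa using this
  funext a
  fin_cases a <;> simpa using ‹_›

/-- For the non-null Einstein–Maxwell Ricci tensor
`Ric_{ab} = -c(λ_a ν_b + ν_a λ_b - ξ_a ξ_b - υ_a υ_b)` built from a real null
tetrad `(l,n,x,y)` with `c ≠ 0`, the only null Ricci eigendirections are those
spanned by `l` and `n`. -/
theorem null_eigenvectors_of_nonnull_EM_Ricci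
    (l n x y : Fin 4 → ℝ)
    (hll : minkowski l l = 0) (hnn : minkowski n n = 0)
    (hxx : minkowski x x = 1) (hyy : minkowski y y = 1)
    (hln : minkowski l n = 1) (hlx : minkowski l x = 0) (hly : minkowski l y = 0)
    (hnx : minkowski n x = 0) (hny : minkowski n y = 0) (hxy : minkowski x y = 0)
    (c : ℝ) (hc : c ≠ 0)
    (Ric : Fin 4 → Fin 4 → ℝ)
    (hRic : ∀ a b, Ric a b =
      -c * (lower l a * lower n b + lower n a * lower l b
        - lower x a * lower x b - lower y a * lower y b))
    (k : Fin 4 → ℝ) (hk0 : k ≠ 0) (hknull : minkowski k k = 0)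
    (δ : ℝ) (heig : ∀ a, ∑ b : Fin 4, Ric a b * k b = δ * lower k a) :
    (∃ t : ℝ, k = t • l) ∨ (∃ t : ℝ, k = t • n) := by
  set p := minkowski l k with hp
  set q := minkowski n k with hq
  set r := minkowski x k with hr
  set s := minkowski y k with hs
  have Hl := contract l n x y k l c δ Ric hRic heig
  have Hn := contract l n x y k n c δ Ric hRic heig
  have Hx := contract l n x y k x c δ Ric hRic heig
  have Hy := contract l n x y k y c δ Ric hRic heig
  have Hk := contract l n x y k k c δ Ric hRic heig
  rw [hll, hln, hlx, hly, ← hp, ← hq] at Hl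
  rw [mink_symm n l, hln, hnn, hnx, hny, ← hp, ← hq] at Hn
  rw [mink_symm x l, hlx, mink_symm x n, hnx, hxx, hxy, ← hr, ← hq, ← hp, ← hs] at Hx
  rw [mink_symm y l, hly, mink_symm y n, hny, mink_symm y x, hxy, hyy,
    ← hr, ← hq, ← hp, ← hs] at Hy
  rw [mink_symm k l, mink_symm k n, mink_symm k x, mink_symm k y, hknull,
    ← hp, ← hq, ← hr, ← hs] at Hk
  -- Hl : -c * (0 * q + 1 * p - 0 * r - 0 * s) = δ * p
  -- Hn : -c * (1 * q + 0 * p - 0 * r - 0 * s) = δ * q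
  -- Hx : -c * (0 * q + 0 * p - 1 * r - 0 * s) = δ * r
  -- Hy : -c * (0 * q + 0 * p - 0 * r - 1 * s) = δ * s
  -- Hk : -c * (p * q + q * p - r * r - s * s) = δ * 0
  have hr0 : r = 0 := by
    by_contra hrne
    have hδ : δ = c := by
      have : (δ - c) * r = 0 := by linarith [Hx]
      rcases mul_eq_zero.mp this with h | h
      · linarith
      · exact absurd h hrne
    have hp0 : p = 0 := by
      have : (2 * c) * p = 0 := by rw [hδ] at Hl; linarith [Hl]
      rcases mul_eq_zero.mp this with h | h
      · exact absurd (by linarith : c = 0) hc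
      · exact h
    have hq0 : q = 0 := by
      have : (2 * c) * q = 0 := by rw [hδ] at Hn; linarith [Hn]
      rcases mul_eq_zero.mp this with h | h
      · exact absurd (by linarith : c = 0) hc
      · exact h
    have hrs : r * r + s * s = 0 := by
      have hcr : c * (r * r + s * s) = 0 := by rw [hp0, hq0] at Hk; linarith [Hk]
      rcases mul_eq_zero.mp hcr with h | h
      · exact absurd h hc
      · exact h
    have : r = 0 := by nlinarith [sq_nonneg r, sq_nonneg s]
    exact hrne this
  have hs0 : s = 0 := by
    by_contra hsne
    have hδ : δ = c := by
      have : (δ - c) * s = 0 := by linarith [Hy]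
      rcases mul_eq_zero.mp this with h | h
      · linarith
      · exact absurd h hsne
    have hp0 : p = 0 := by
      have : (2 * c) * p = 0 := by rw [hδ] at Hl; linarith [Hl]
      rcases mul_eq_zero.mp this with h | h
      · exact absurd (by linarith : c = 0) hc
      · exact h
    have hq0 : q = 0 := by
      have : (2 * c) * q = 0 := by rw [hδ] at Hn; linarith [Hn]
      rcases mul_eq_zero.mp this with h | h
      · exact absurd (by linarith : c = 0) hc
      · exact h
    have hrs : r * r + s * s = 0 := by
      have hcr : c * (r * r + s * s) = 0 := by rw [hp0, hq0] at Hk; linarith [Hk]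
      rcases mul_eq_zero.mp hcr with h | h
      · exact absurd h hc
      · exact h
    have : s = 0 := by nlinarith [sq_nonneg r, sq_nonneg s]
    exact hsne this
  have hpq : p * q = 0 := by
    have : c * (2 * (p * q)) = 0 := by rw [hr0, hs0] at Hk; linarith [Hk]
    rcases mul_eq_zero.mp this with h | h
    · exact absurd h hc
    · linarith
  rcases mul_eq_zero.mp hpq with hp0 | hq0
  · -- p = mink l k = 0 : k is proportional to l
    left
    refine ⟨q, ?_⟩
    have hw : (fun i => k i - q * l i) = 0 := by
      apply tetrad_nondeg l n x y hln hll hnn hxx hyy hlx hly hnx hny hxy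
      · rw [mink_sub_smul, hll, ← hp, hp0]; ring
      · rw [mink_sub_smul, mink_symm n l, hln, ← hq]; ring
      · rw [mink_sub_smul, mink_symm x l, hlx, ← hr, hr0]; ring
      · rw [mink_sub_smul, mink_symm y l, hly, ← hs, hs0]; ring
    funext i
    have := congrFun hw i
    simp only [Pi.zero_apply] at this
    simp only [Pi.smul_apply, smul_eq_mul]
    linarith
  · -- q = mink n k = 0 : k is proportional to n
    right
    refine ⟨p, ?_⟩
    have hw : (fun i => k i - p * n i) = 0 := by
      apply tetrad_nondeg l n x y hln hll hnn hxx hyy hlx hly hnx hny hxy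
      · rw [mink_sub_smul, hln, ← hp]; ring
      · rw [mink_sub_smul, hnn, ← hq, hq0]; ring
      · rw [mink_sub_smul, mink_symm x n, hnx, ← hr, hr0]; ring
      · rw [mink_sub_smul, mink_symm y n, hny, ← hs, hs0]; ring
    funext i
    have := congrFun hw i
    simp only [Pi.zero_apply] at this
    simp only [Pi.smul_apply, smul_eq_mul]
    linarith
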